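/- Let (K,+,·,0,1) be an absorptive commutative semiring and let ε ∈ K satisfy ε·ε = ε. Then for every formula ψ(x̄) ∈ FO(τ) and every tuple ā: if π_inf⟦ψ(ā)⟧ = ε then also π⟦ψ(ā)⟧ = ε, where π is a K-interpretation and π_inf the same map viewed as an interpretation in the associated lattice semiring K_inf. -/

import Mathlib

open MeasureTheory Filter Set
open scoped ENNReal BigOperators

/-- A (fully instantiated) literal over the relational vocabulary given by the
relation symbols `R` with arities `ar`, on the universe `A`: a relation symbol,
a tuple of arguments, and a polarity (`true` = positive atom, `false` = negated atom). -/
structure Lit (R : Type) (ar : R → ℕ) (A : Type) : Type where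
  rel : R
  args : Fin (ar rel) → A
  pos : Bool

/-- A (fully instantiated) relational atom. -/
abbrev Atoms (R : Type) (ar : R → ℕ) (A : Type) : Type := (r : R) × (Fin (ar r) → A)

variable {R : Type} {ar : R → ℕ} {A B K : Type}

/-- Renaming of a literal along a map of universes. -/
def Lit.map (f : A → B) (l : Lit R ar A) : Lit R ar B :=
  ⟨l.rel, fun j => f (l.args j), l.pos⟩

/-- A `K`-interpretation (or atomic type) is model-defining / consistent (w.r.t. the
zero element `z` of `K`) if out of each pair of complementary literals exactly one is
mapped to `z`. -/
def ModelDefining (z : K) (π : Lit R ar A → K) : Prop :=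
  ∀ (r : R) (as : Fin (ar r) → A), (π ⟨r, as, true⟩ = z ↔ π ⟨r, as, false⟩ ≠ z)

/-- The atomic `m`-type realised by the tuple `a` in the interpretation `π`. -/
def typeOf {m : ℕ} (π : Lit R ar A → K) (a : Fin m → A) : Lit R ar (Fin m) → K :=
  fun l => π (l.map a)

/-- The tuple `a` (of pairwise distinct elements) realises the atomic `m`-type `ρ` in `π`. -/
def Realizes {m : ℕ} (π : Lit R ar A → K) (a : Fin m → A) (ρ : Lit R ar (Fin m) → K) : Prop :=
  Function.Injective a ∧ typeOf π a = ρ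

/-- The atomic `(m+1)`-type `ρp` extends the atomic `m`-type `ρ`. -/
def Extends {m : ℕ} (ρp : Lit R ar (Fin (m+1)) → K) (ρ : Lit R ar (Fin m) → K) : Prop :=
  ∀ l : Lit R ar (Fin m), ρp (l.map Fin.castSucc) = ρ l

/-- The `k`-extension property of an interpretation `π` (with zero element `z`). -/
def ExtProp (z : K) (π : Lit R ar A → K) (k : ℕ) : Prop :=
  ∀ m, m < k → ∀ ρ : Lit R ar (Fin m) → K, ModelDefining z ρ →
    ∀ ρp : Lit R ar (Fin (m+1)) → K, ModelDefining z ρp → Extends ρp ρ →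
      ∀ a : Fin m → A, Realizes π a ρ →
        ∃ b : A, b ∉ Set.range a ∧ Realizes π (Fin.snoc a b) ρp

/-- A sequence of extended nonnegative reals converges to `L` exponentially fast. -/
def ExpConv (f : ℕ → ℝ≥0∞) (L : ℝ≥0∞) : Prop :=
  ∃ C q : ℝ≥0∞, C ≠ ⊤ ∧ q < 1 ∧ ∀ n, f n ≤ L + C * q ^ n ∧ L ≤ f n + C * q ^ n

/-- The interpretation determined by a sample point: each atom gets a pair
(value of positive literal, value of negated literal). -/
def interpOf (ω : Atoms R ar A → K × K) : Lit R ar A → K :=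
  fun l => if l.pos then (ω ⟨l.rel, l.args⟩).1 else (ω ⟨l.rel, l.args⟩).2

/-- The per-atom distribution: with probability 1/2 the atom is true (its negation
gets value `z`, i.e. false, and its value is sampled from `p`), with probability 1/2
it is false (symmetrically). -/
noncomputable def atomMeasure [MeasurableSpace K] (z : K) (p : Measure K) : Measure (K × K) :=
  (2⁻¹ : ℝ≥0∞) • (Measure.map (fun j => (j, z)) p + Measure.map (fun j => (z, j)) p)

/-- The distribution `μ_{n,p}` of random `K`-interpretations on universe `[n]`,
presented on the sample space assigning to each atom the pair of values of its
positive and negated literal. -/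
noncomputable def muI [MeasurableSpace K] [Fintype R] (z : K) (p : Measure K) (n : ℕ) :
    Measure (Atoms R ar (Fin n) → K × K) :=
  Measure.pi fun _ => atomMeasure z p
/-- First-order formulae in negation normal form over the vocabulary `(R, ar)`,
with standard quantifiers, in a context of `i` variables (de Bruijn style:
`ex`/`all` bind the last variable of the extended context). -/
inductive FO (R : Type) (ar : R → ℕ) : ℕ → Type
  | eq   : {i : ℕ} → Fin i → Fin i → FO R ar i
  | ne   : {i : ℕ} → Fin i → Fin i → FO R ar i
  | atom : {i : ℕ} → (r : R) → (Fin (ar r) → Fin i) → Bool → FO R ar i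
  | or   : {i : ℕ} → FO R ar i → FO R ar i → FO R ar i
  | and  : {i : ℕ} → FO R ar i → FO R ar i → FO R ar i
  | ex   : {i : ℕ} → FO R ar (i+1) → FO R ar i
  | all  : {i : ℕ} → FO R ar (i+1) → FO R ar i

/-- Semiring semantics of first-order formulae over a commutative semiring `K`:
`∨`/`∃` are sums, `∧`/`∀` are products. -/
noncomputable def evalS [CommSemiring K] [Fintype A] [DecidableEq A]
    (π : Lit R ar A → K) : {i : ℕ} → FO R ar i → (Fin i → A) → K
  | _, .eq j l, v => if v j = v l then 1 else 0
  | _, .ne j l, v => if v j = v l then 0 else 1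
  | _, .atom r as pos, v => π ⟨r, fun j => v (as j), pos⟩
  | _, .or φ θ, v => evalS π φ v + evalS π θ v
  | _, .and φ θ, v => evalS π φ v * evalS π θ v
  | _, .ex φ, v => ∑ b : A, evalS π φ (Fin.snoc v b)
  | _, .all φ, v => ∏ b : A, evalS π φ (Fin.snoc v b)

/-- Semantics of first-order formulae in a lattice semiring (a bounded distributive
lattice, with `0 = ⊥`, `1 = ⊤`, addition `⊔` and multiplication `⊓`). -/
noncomputable def evalL [DistribLattice K] [BoundedOrder K] [Fintype A] [DecidableEq A]
    (π : Lit R ar A → K) : {i : ℕ} → FO R ar i → (Fin i → A) → K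
  | _, .eq j l, v => if v j = v l then ⊤ else ⊥
  | _, .ne j l, v => if v j = v l then ⊥ else ⊤
  | _, .atom r as pos, v => π ⟨r, fun j => v (as j), pos⟩
  | _, .or φ θ, v => evalL π φ v ⊔ evalL π θ v
  | _, .and φ θ, v => evalL π φ v ⊓ evalL π θ v
  | _, .ex φ, v => Finset.univ.sup fun b : A => evalL π φ (Fin.snoc v b)
  | _, .all φ, v => Finset.univ.inf fun b : A => evalL π φ (Fin.snoc v b)

section AbsorptiveAux

variable {K' : Type} [CommSemiring K'] [DistribLattice K'] [BoundedOrder K']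

lemma abs_add_idem (habs : ∀ a b : K', a + a * b = a) (a : K') : a + a = a := by
  have := habs a 1; rwa [mul_one] at this

lemma abs_zero_le (hle : ∀ a b : K', a ≤ b ↔ a + b = b) (a : K') : (0 : K') ≤ a := by
  rw [hle]; exact zero_add a

lemma abs_le_add (habs : ∀ a b : K', a + a * b = a)
    (hle : ∀ a b : K', a ≤ b ↔ a + b = b) (a b : K') : a ≤ a + b := by
  rw [hle, ← add_assoc, abs_add_idem habs]

lemma absK_add_le (hle : ∀ a b : K', a ≤ b ↔ a + b = b) {a b c : K'}
    (h1 : a ≤ c) (h2 : b ≤ c) : a + b ≤ c := by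
  rw [hle] at *
  rw [add_assoc, h2, h1]

lemma abs_mul_le_left (habs : ∀ a b : K', a + a * b = a)
    (hle : ∀ a b : K', a ≤ b ↔ a + b = b) (a b : K') : a * b ≤ a := by
  rw [hle, add_comm]; exact habs a b

lemma abs_le_one (habs : ∀ a b : K', a + a * b = a)
    (hle : ∀ a b : K', a ≤ b ↔ a + b = b) (a : K') : a ≤ 1 := by
  have := abs_mul_le_left habs hle 1 a; rwa [one_mul] at this

lemma abs_mul_mono (habs : ∀ a b : K', a + a * b = a)
    (hle : ∀ a b : K', a ≤ b ↔ a + b = b) {a b c d : K'}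
    (h1 : a ≤ b) (h2 : c ≤ d) : a * c ≤ b * d := by
  rw [hle] at *
  calc a * c + b * d = a * c + (a + b) * (c + d) := by rw [h1, h2]
    _ = (a * c + a * c) + (a * d + (b * c + b * d)) := by ring
    _ = a * c + (a * d + (b * c + b * d)) := by rw [abs_add_idem habs]
    _ = (a + b) * (c + d) := by ring
    _ = b * d := by rw [h1, h2]

lemma abs_pow_mono (habs : ∀ a b : K', a + a * b = a) (hle : ∀ a b : K', a ≤ b ↔ a + b = b) {a b : K'}
    (h : a ≤ b) (n : ℕ) : a ^ n ≤ b ^ n := by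
  induction n with
  | zero => simp
  | succ n ih => rw [pow_succ, pow_succ]; exact abs_mul_mono habs hle ih h

lemma abs_pow_anti (habs : ∀ a b : K', a + a * b = a)
    (hle : ∀ a b : K', a ≤ b ↔ a + b = b) (a : K') {m k : ℕ} (h : m ≤ k) :
    a ^ k ≤ a ^ m := by
  have : a ^ k = a ^ m * a ^ (k - m) := by rw [← pow_add, Nat.add_sub_cancel' h]
  rw [this]; exact abs_mul_le_left habs hle _ _

lemma abs_natcast_le_one (habs : ∀ a b : K', a + a * b = a)
    (hle : ∀ a b : K', a ≤ b ↔ a + b = b) (m : ℕ) : (m : K') ≤ 1 :=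
  abs_le_one habs hle _

lemma abs_sum_le (hle : ∀ a b : K', a ≤ b ↔ a + b = b) {α : Type*} {s : Finset α}
    {f : α → K'} {c : K'} (h : ∀ b ∈ s, f b ≤ c) : (∑ b ∈ s, f b) ≤ c := by
  classical
  induction s using Finset.induction_on with
  | empty => simpa using abs_zero_le hle c
  | insert _ _ hx ih =>
      rw [Finset.sum_insert hx]
      exact absK_add_le hle (h _ (Finset.mem_insert_self _ _))
        (ih fun b hb => h b (Finset.mem_insert_of_mem hb))

lemma abs_prod_le (habs : ∀ a b : K', a + a * b = a)
    (hle : ∀ a b : K', a ≤ b ↔ a + b = b) {α : Type*} [DecidableEq α] {s : Finset α}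
    {f : α → K'} {b : α} (hb : b ∈ s) : (∏ x ∈ s, f x) ≤ f b := by
  rw [← Finset.mul_prod_erase s f hb]
  exact abs_mul_le_left habs hle _ _

lemma abs_prod_mono (habs : ∀ a b : K', a + a * b = a) (hle : ∀ a b : K', a ≤ b ↔ a + b = b) {α : Type*} {s : Finset α}
    {f g : α → K'} (h : ∀ b ∈ s, f b ≤ g b) : (∏ x ∈ s, f x) ≤ ∏ x ∈ s, g x := by
  classical
  induction s using Finset.induction_on with
  | empty => simp
  | insert _ _ hx ih =>
      rw [Finset.prod_insert hx, Finset.prod_insert hx]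
      exact abs_mul_mono habs hle (h _ (Finset.mem_insert_self _ _))
        (ih fun b hb => h b (Finset.mem_insert_of_mem hb))

lemma abs_binom (habs : ∀ a b : K', a + a * b = a)
    (hle : ∀ a b : K', a ≤ b ↔ a + b = b) {a b c d : K'} {m n : ℕ}
    (h1 : a ^ m ≤ c) (h2 : b ^ n ≤ d) : (a + b) ^ (m + n) ≤ c + d := by
  rw [add_pow]
  apply abs_sum_le hle
  intro k hk
  have hterm : a ^ k * b ^ (m + n - k) * ((m + n).choose k : K') ≤ a ^ k * b ^ (m + n - k) := by
    have := abs_mul_mono habs hle (le_refl (a ^ k * b ^ (m + n - k)))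
      (abs_natcast_le_one habs hle ((m + n).choose k))
    rwa [mul_one] at this
  refine le_trans hterm ?_
  by_cases hkm : m ≤ k
  · have : a ^ k * b ^ (m + n - k) ≤ a ^ k := abs_mul_le_left habs hle _ _
    refine le_trans this (le_trans (abs_pow_anti habs hle a hkm) (le_trans h1 ?_))
    exact abs_le_add habs hle c d
  · push_neg at hkm
    have hnk : n ≤ m + n - k := by omega
    have : a ^ k * b ^ (m + n - k) ≤ b ^ (m + n - k) := by
      rw [mul_comm]; exact abs_mul_le_left habs hle _ _
    refine le_trans this (le_trans (abs_pow_anti habs hle b hnk) (le_trans h2 ?_))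
    rw [add_comm]; exact abs_le_add habs hle d c

lemma abs_sup_pow (habs : ∀ a b : K', a + a * b = a)
    (hle : ∀ a b : K', a ≤ b ↔ a + b = b)
    (hsup : ∀ a b : K', a ⊔ b = a + b) (hbot : (⊥ : K') = 0)
    {α : Type*} {s : Finset α} {f g : α → K'}
    (h : ∀ b ∈ s, ∃ n, (f b) ^ n ≤ g b) :
    ∃ n, (s.sup f) ^ n ≤ ∑ b ∈ s, g b := by
  classical
  induction s using Finset.induction_on with
  | empty => exact ⟨1, by simp [hbot]⟩
  | @insert x s hx ih =>
      obtain ⟨m, hm⟩ := h x (Finset.mem_insert_self _ _)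
      obtain ⟨n, hn⟩ := ih fun b hb => h b (Finset.mem_insert_of_mem hb)
      refine ⟨m + n, ?_⟩
      rw [Finset.sup_insert, Finset.sum_insert hx, hsup]
      exact abs_binom habs hle hm hn

lemma abs_inf_pow (habs : ∀ a b : K', a + a * b = a)
    (hle : ∀ a b : K', a ≤ b ↔ a + b = b) (htop : (⊤ : K') = 1)
    {α : Type*} {s : Finset α} {f g : α → K'}
    (h : ∀ b ∈ s, ∃ n, (f b) ^ n ≤ g b) :
    ∃ n, (s.inf f) ^ n ≤ ∏ b ∈ s, g b := by
  classical
  induction s using Finset.induction_on with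
  | empty => exact ⟨1, by simp [htop]⟩
  | @insert x s hx ih =>
      obtain ⟨m, hm⟩ := h x (Finset.mem_insert_self _ _)
      obtain ⟨n, hn⟩ := ih fun b hb => h b (Finset.mem_insert_of_mem hb)
      refine ⟨m + n, ?_⟩
      rw [Finset.inf_insert, Finset.prod_insert hx, pow_add]
      exact abs_mul_mono habs hle
        (le_trans (abs_pow_mono habs hle inf_le_left m) hm)
        (le_trans (abs_pow_mono habs hle inf_le_right n) hn)

lemma evalS_le_evalL {R : Type} {ar : R → ℕ}
    (habs : ∀ a b : K', a + a * b = a)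
    (hle : ∀ a b : K', a ≤ b ↔ a + b = b)
    (hsup : ∀ a b : K', a ⊔ b = a + b)
    (hbot : (⊥ : K') = 0) (htop : (⊤ : K') = 1)
    {A : Type} [Fintype A] [DecidableEq A] (π : Lit R ar A → K')
    {i : ℕ} (ψ : FO R ar i) : ∀ v : Fin i → A, evalS π ψ v ≤ evalL π ψ v := by
  induction ψ with
  | eq j l => intro v; simp only [evalS, evalL, htop, hbot]; split <;> simp
  | ne j l => intro v; simp only [evalS, evalL, htop, hbot]; split <;> simp
  | atom r as pos => intro v; simp [evalS, evalL]
  | or φ θ ihφ ihθ =>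
      intro v
      simp only [evalS, evalL, hsup]
      exact absK_add_le hle
        (le_trans (ihφ v) (abs_le_add habs hle _ _))
        (le_trans (ihθ v) (by rw [add_comm]; exact abs_le_add habs hle _ _))
  | and φ θ ihφ ihθ =>
      intro v
      simp only [evalS, evalL]
      exact le_inf
        (le_trans (abs_mul_le_left habs hle _ _) (ihφ v))
        (le_trans (by rw [mul_comm]; exact abs_mul_le_left habs hle _ _) (ihθ v))
  | ex φ ih =>
      intro v
      simp only [evalS, evalL]
      exact abs_sum_le hle fun b _ =>
        le_trans (ih _) (Finset.le_sup (f := fun b => evalL π φ (Fin.snoc v b)) (Finset.mem_univ b))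
  | all φ ih =>
      intro v
      simp only [evalS, evalL]
      exact Finset.le_inf fun b _ =>
        le_trans (abs_prod_le habs hle (Finset.mem_univ b)) (ih _)

lemma evalL_pow_le_evalS {R : Type} {ar : R → ℕ}
    (habs : ∀ a b : K', a + a * b = a)
    (hle : ∀ a b : K', a ≤ b ↔ a + b = b)
    (hsup : ∀ a b : K', a ⊔ b = a + b)
    (hbot : (⊥ : K') = 0) (htop : (⊤ : K') = 1)
    {A : Type} [Fintype A] [DecidableEq A] (π : Lit R ar A → K')
    {i : ℕ} (ψ : FO R ar i) :
    ∀ v : Fin i → A, ∃ n, (evalL π ψ v) ^ n ≤ evalS π ψ v := by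
  induction ψ with
  | eq j l => intro v; exact ⟨1, by simp only [evalS, evalL, htop, hbot]; split <;> simp⟩
  | ne j l => intro v; exact ⟨1, by simp only [evalS, evalL, htop, hbot]; split <;> simp⟩
  | atom r as pos => intro v; exact ⟨1, by simp [evalS, evalL]⟩
  | or φ θ ihφ ihθ =>
      intro v
      obtain ⟨m, hm⟩ := ihφ v
      obtain ⟨n, hn⟩ := ihθ v
      exact ⟨m + n, by simp only [evalS, evalL, hsup]; exact abs_binom habs hle hm hn⟩
  | and φ θ ihφ ihθ =>
      intro v
      obtain ⟨m, hm⟩ := ihφ v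
      obtain ⟨n, hn⟩ := ihθ v
      refine ⟨m + n, ?_⟩
      simp only [evalS, evalL, pow_add]
      exact abs_mul_mono habs hle
        (le_trans (abs_pow_mono habs hle inf_le_left m) hm)
        (le_trans (abs_pow_mono habs hle inf_le_right n) hn)
  | ex φ ih =>
      intro v
      simpa only [evalS, evalL] using
        abs_sup_pow habs hle hsup hbot (fun b _ => ih (Fin.snoc v b))
  | all φ ih =>
      intro v
      simpa only [evalS, evalL] using
        abs_inf_pow habs hle htop (fun b _ => ih (Fin.snoc v b))

end AbsorptiveAux

/-- Let `K` be an absorptive commutative semiring (with associated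
lattice semiring `K_inf` on the natural order), and let `ε ∈ K` be multiplicatively
idempotent (`ε·ε = ε`).  Then for every `K`-interpretation `π`, every formula `ψ`
and every tuple `ā`: if `π_inf⟦ψ(ā)⟧ = ε` then also `π⟦ψ(ā)⟧ = ε`. -/
theorem statement_10
    {R : Type} [Fintype R] [DecidableEq R] {ar : R → ℕ}
    {K : Type} [CommSemiring K] [DistribLattice K] [BoundedOrder K]
    (habs : ∀ a b : K, a + a * b = a)
    (hle : ∀ a b : K, a ≤ b ↔ a + b = b)
    (hsup : ∀ a b : K, a ⊔ b = a + b)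
    (hbot : (⊥ : K) = 0) (htop : (⊤ : K) = 1)
    (ε : K) (hid : ε * ε = ε)
    {A : Type} [Fintype A] [DecidableEq A]
    (π : Lit R ar A → K) (hmd : ModelDefining (0 : K) π)
    {i : ℕ} (ψ : FO R ar i) (v : Fin i → A) :
    evalL π ψ v = ε → evalS π ψ v = ε := by
  intro hL
  obtain ⟨n, hn⟩ := evalL_pow_le_evalS habs hle hsup hbot htop π ψ v
  rw [hL] at hn
  have hS := evalS_le_evalL habs hle hsup hbot htop π ψ v
  rw [hL] at hS
  have hεn : ε ≤ ε ^ n := by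
    have h1 : ∀ m, ε ^ (m + 1) = ε := by
      intro m
      induction m with
      | zero => simp
      | succ m ih => rw [pow_succ, ih, hid]
    cases n with
    | zero => simpa using abs_le_one habs hle ε
    | succ m => rw [h1 m]
  exact le_antisymm hS (le_trans hεn hn)
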